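/- For the Fourier sine/cosine basis with n = 2m even, the real-zero intensity is constant: g_n(x) = (1/(2π)) √(n(n+1)/3) for every real x; consequently, for real a < b, the expected number of real zeros of P_n in (a,b) equals (b−a) √(n(n+1)/3) / (2π). -/

import Mathlib

open Finset intervalIntegral

private lemma sum_sq_aux (m : ℕ) :
    ∑ k ∈ Finset.range m, ((k : ℝ) + 1) ^ 2 = (m : ℝ) * (m + 1) * (2 * m + 1) / 6 := by
  induction m with
  | zero => simp
  | succ p ih => rw [Finset.sum_range_succ, ih]; push_cast; ring

private lemma reindex_aux (m : ℕ) (F : ℕ → ℝ) :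
    ∑ j ∈ Finset.range (2 * m + 1), F j
      = F 0 + ∑ k ∈ Finset.range m, (F (2 * k + 1) + F (2 * k + 2)) := by
  induction m with
  | zero => simp
  | succ p ih =>
    have h : 2 * (p + 1) + 1 = (2 * p + 1) + 1 + 1 := by ring
    rw [h, Finset.sum_range_succ, Finset.sum_range_succ, ih, Finset.sum_range_succ]
    ring

private lemma deriv_sin_cmul (c x : ℝ) :
    deriv (fun y => Real.sin (c * y)) x = c * Real.cos (c * x) := by
  have h : HasDerivAt (fun y => Real.sin (c * y)) (Real.cos (c * x) * (c * 1)) x :=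
    (Real.hasDerivAt_sin (c * x)).comp x ((hasDerivAt_id x).const_mul c)
  rw [h.deriv]; ring

private lemma deriv_cos_cmul (c x : ℝ) :
    deriv (fun y => Real.cos (c * y)) x = -(c * Real.sin (c * x)) := by
  have h : HasDerivAt (fun y => Real.cos (c * y)) (-Real.sin (c * x) * (c * 1)) x :=
    (Real.hasDerivAt_cos (c * x)).comp x ((hasDerivAt_id x).const_mul c)
  rw [h.deriv]; ring

/-- **(Vanderbei, Fourier sine/cosine series.)** For the sine/cosine basis with `n = 2m`, the
real-zero intensity is constant, `g_n(x) = (1/(2π))√(n(n+1)/3)`, so the expected number of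
real zeros in `(a,b)` (which equals `∫_a^b g_n`) is `(b−a)√(n(n+1)/3)/(2π)`. -/
theorem fourier_real_intensity_constant
    (m : ℕ) (hm : 0 < m) (n : ℕ) (hn : n = 2 * m)
    (f : ℕ → ℝ → ℝ)
    (hf0 : ∀ x, f 0 x = 1)
    (hfodd : ∀ k : ℕ, 1 ≤ k → k ≤ m → ∀ x, f (2 * k - 1) x = Real.sin ((k : ℝ) * x))
    (hfeven : ∀ k : ℕ, 1 ≤ k → k ≤ m → ∀ x, f (2 * k) x = Real.cos ((k : ℝ) * x))
    (A0 A1 A2 B0 g : ℝ → ℝ)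
    (hA0 : ∀ x, A0 x = ∑ j ∈ Finset.range (n + 1), (f j x) ^ 2)
    (hA1 : ∀ x, A1 x = ∑ j ∈ Finset.range (n + 1), f j x * deriv (f j) x)
    (hA2 : ∀ x, A2 x = ∑ j ∈ Finset.range (n + 1), (deriv (f j) x) ^ 2)
    (hB0 : ∀ x, B0 x = ∑ j ∈ Finset.range (n + 1), |f j x| ^ 2)
    (hg : ∀ x, g x = Real.sqrt (A2 x * A0 x - (A1 x) ^ 2) / (Real.pi * B0 x)) :
    (∀ x : ℝ, g x = (1 / (2 * Real.pi)) * Real.sqrt ((n : ℝ) * ((n : ℝ) + 1) / 3)) ∧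
    (∀ a b : ℝ, a < b →
      ∫ x in a..b, g x = (b - a) * Real.sqrt ((n : ℝ) * ((n : ℝ) + 1) / 3) / (2 * Real.pi)) := by
  -- function-level descriptions of the basis
  have hf0' : f 0 = fun _ => (1 : ℝ) := funext hf0
  have hodd : ∀ k ∈ Finset.range m, f (2 * k + 1) = fun y => Real.sin (((k : ℝ) + 1) * y) := by
    intro k hk
    have hk' : k + 1 ≤ m := Finset.mem_range.mp hk
    funext y
    have h := hfodd (k + 1) (Nat.le_add_left 1 k) hk' y
    have hidx : 2 * (k + 1) - 1 = 2 * k + 1 := by omega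
    rw [hidx] at h
    rw [h]; push_cast; ring_nf
  have heven : ∀ k ∈ Finset.range m, f (2 * k + 2) = fun y => Real.cos (((k : ℝ) + 1) * y) := by
    intro k hk
    have hk' : k + 1 ≤ m := Finset.mem_range.mp hk
    funext y
    have h := hfeven (k + 1) (Nat.le_add_left 1 k) hk' y
    have hidx : 2 * (k + 1) = 2 * k + 2 := by ring
    rw [hidx] at h
    rw [h]; push_cast; ring_nf
  -- values of the coefficient functions
  have hA0x : ∀ x, A0 x = (m : ℝ) + 1 := by
    intro x
    rw [hA0, hn, reindex_aux, hf0']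
    have : ∑ k ∈ Finset.range m,
        ((f (2 * k + 1) x) ^ 2 + (f (2 * k + 2) x) ^ 2) = ∑ k ∈ Finset.range m, (1 : ℝ) := by
      refine Finset.sum_congr rfl fun k hk => ?_
      rw [hodd k hk, heven k hk]
      exact Real.sin_sq_add_cos_sq _
    rw [this]; simp [add_comm]
  have hB0x : ∀ x, B0 x = (m : ℝ) + 1 := by
    intro x
    have : B0 x = A0 x := by
      rw [hB0, hA0]
      exact Finset.sum_congr rfl fun j _ => sq_abs _
    rw [this, hA0x]
  have hA1x : ∀ x, A1 x = 0 := by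
    intro x
    rw [hA1, hn, reindex_aux, hf0']
    have h1 : deriv (fun _ : ℝ => (1 : ℝ)) x = 0 := deriv_const x 1
    have : ∑ k ∈ Finset.range m,
        (f (2 * k + 1) x * deriv (f (2 * k + 1)) x
          + f (2 * k + 2) x * deriv (f (2 * k + 2)) x) = ∑ k ∈ Finset.range m, (0 : ℝ) := by
      refine Finset.sum_congr rfl fun k hk => ?_
      rw [hodd k hk, heven k hk, deriv_sin_cmul, deriv_cos_cmul]
      ring
    rw [this]; simp [h1]
  have hA2x : ∀ x, A2 x = (m : ℝ) * (m + 1) * (2 * m + 1) / 6 := by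
    intro x
    rw [hA2, hn, reindex_aux, hf0']
    have h1 : deriv (fun _ : ℝ => (1 : ℝ)) x = 0 := deriv_const x 1
    have : ∑ k ∈ Finset.range m,
        ((deriv (f (2 * k + 1)) x) ^ 2 + (deriv (f (2 * k + 2)) x) ^ 2)
          = ∑ k ∈ Finset.range m, ((k : ℝ) + 1) ^ 2 := by
      refine Finset.sum_congr rfl fun k hk => ?_
      rw [hodd k hk, heven k hk, deriv_sin_cmul, deriv_cos_cmul]
      have := Real.sin_sq_add_cos_sq (((k : ℝ) + 1) * x)
      nlinarith [this]
    rw [this, sum_sq_aux]; simp [h1]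
  -- the constant value of g
  set M : ℝ := (m : ℝ) with hM
  have hMpos : (0 : ℝ) < M + 1 := by positivity
  have hBnn : (0 : ℝ) ≤ M * (2 * M + 1) / 6 := by positivity
  have hgconst : ∀ x : ℝ, g x = (1 / (2 * Real.pi)) * Real.sqrt ((n : ℝ) * ((n : ℝ) + 1) / 3) := by
    intro x
    rw [hg, hA0x, hA1x, hA2x, hB0x]
    have hnℝ : (n : ℝ) = 2 * M := by rw [hn]; push_cast; ring
    rw [hnℝ]
    have h1 : M * (M + 1) * (2 * M + 1) / 6 * (M + 1) - 0 ^ 2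
        = (M + 1) ^ 2 * (M * (2 * M + 1) / 6) := by ring
    have h2 : 2 * M * (2 * M + 1) / 3 = 4 * (M * (2 * M + 1) / 6) := by ring
    rw [h1, h2, Real.sqrt_mul (sq_nonneg (M + 1)), Real.sqrt_mul (by norm_num : (0:ℝ) ≤ 4),
      Real.sqrt_sq hMpos.le, show (4 : ℝ) = 2 ^ 2 by norm_num, Real.sqrt_sq (by norm_num : (0:ℝ) ≤ 2)]
    have hπ : Real.pi ≠ 0 := Real.pi_ne_zero
    field_simp
  refine ⟨hgconst, fun a b _ => ?_⟩
  have : ∫ x in a..b, g x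
      = ∫ _ in a..b, (1 / (2 * Real.pi)) * Real.sqrt ((n : ℝ) * ((n : ℝ) + 1) / 3) := by
    exact intervalIntegral.integral_congr fun x _ => hgconst x
  rw [this, intervalIntegral.integral_const, smul_eq_mul]
  ring
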